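/- Let d ≥ 2, let y₁, …, yₙ ∈ ℝ^d be mutually distinct, and let c₁, …, cₙ ∈ ℂ. If the function u(θ) = Σⱼ cⱼ·exp(i·yⱼ·θ) vanishes for all θ ∈ S^{d-1} (the real unit sphere in ℝ^d), then cⱼ = 0 for all j. In other words, the family of functions θ ↦ exp(i·y·θ) on S^{d-1}, indexed by y ∈ ℝ^d, is linearly independent over ℂ. -/

import Mathlib

open scoped RealInnerProductSpace

open MeasureTheory in
/-- A generic direction: there is a unit vector `e` such that the projections `⟪y j, e⟫`
are pairwise distinct. -/
lemma aux_exists_dir (d n : ℕ) (hd : 1 ≤ d) (y : Fin n → EuclideanSpace ℝ (Fin d))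
    (hy : Function.Injective y) :
    ∃ e : EuclideanSpace ℝ (Fin d), ‖e‖ = 1 ∧
      Function.Injective (fun j => (⟪y j, e⟫ : ℝ)) := by
  have hnt : Nontrivial (EuclideanSpace ℝ (Fin d)) := by
    apply Module.nontrivial_of_finrank_pos (R := ℝ)
    rw [finrank_euclideanSpace_fin]; omega
  set S : Fin n × Fin n → Set (EuclideanSpace ℝ (Fin d)) :=
    fun p => {v : EuclideanSpace ℝ (Fin d) | p.1 ≠ p.2 ∧ ⟪y p.1 - y p.2, v⟫ = 0} with hSdef
  have hS : ∀ p, volume (S p) = 0 := by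
    intro p
    by_cases hp : p.1 = p.2
    · have : S p = ∅ := by ext v; simp [hSdef, hp]
      simp [this]
    · have hw : y p.1 - y p.2 ≠ 0 := sub_ne_zero.2 fun h => hp (hy h)
      have hker : (LinearMap.ker ((innerSL ℝ (y p.1 - y p.2)).toLinearMap) : Submodule ℝ (EuclideanSpace ℝ (Fin d))) ≠ ⊤ := by
        intro htop
        apply hw
        have hmem : y p.1 - y p.2 ∈ LinearMap.ker ((innerSL ℝ (y p.1 - y p.2)).toLinearMap) :=
          htop ▸ trivial
        have h0 : ⟪y p.1 - y p.2, y p.1 - y p.2⟫ = 0 := hmem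
        exact inner_self_eq_zero.mp h0
      have hsub : S p ⊆ (LinearMap.ker ((innerSL ℝ (y p.1 - y p.2)).toLinearMap) : Set (EuclideanSpace ℝ (Fin d))) := by
        intro v hv
        exact hv.2
      exact measure_mono_null hsub (Measure.addHaar_submodule _ _ hker)
  have hbot : volume ({(0 : EuclideanSpace ℝ (Fin d))} : Set (EuclideanSpace ℝ (Fin d))) = 0 := by
    have : ({(0 : EuclideanSpace ℝ (Fin d))} : Set (EuclideanSpace ℝ (Fin d))) = ((⊥ : Submodule ℝ (EuclideanSpace ℝ (Fin d))) : Set (EuclideanSpace ℝ (Fin d))) := by simp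
    rw [this]
    exact Measure.addHaar_submodule _ _ bot_ne_top
  have hunion : volume (({(0 : EuclideanSpace ℝ (Fin d))} : Set (EuclideanSpace ℝ (Fin d))) ∪ ⋃ p, S p) = 0 :=
    measure_union_null hbot (measure_iUnion_null hS)
  have huniv : volume (Set.univ : Set (EuclideanSpace ℝ (Fin d))) ≠ 0 :=
    isOpen_univ.measure_ne_zero volume Set.univ_nonempty
  have hne : (({(0 : EuclideanSpace ℝ (Fin d))} : Set (EuclideanSpace ℝ (Fin d))) ∪ ⋃ p, S p) ≠ Set.univ := fun h => huniv (h ▸ hunion)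
  obtain ⟨e₀, he₀⟩ : ∃ e₀ : EuclideanSpace ℝ (Fin d), e₀ ∉ (({(0 : EuclideanSpace ℝ (Fin d))} : Set (EuclideanSpace ℝ (Fin d))) ∪ ⋃ p, S p) := by
    by_contra hc
    push_neg at hc
    exact hne (Set.eq_univ_of_forall hc)
  have he₀0 : e₀ ≠ 0 := fun h => he₀ (Set.mem_union_left _ (by simp [h]))
  have hproj : ∀ j k : Fin n, j ≠ k → ⟪y j - y k, e₀⟫ ≠ 0 := by
    intro j k hjk h0
    exact he₀ (Set.mem_union_right _ (Set.mem_iUnion.2 ⟨(j, k), hjk, h0⟩))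
  refine ⟨‖e₀‖⁻¹ • e₀, ?_, ?_⟩
  · rw [norm_smul, norm_inv, norm_norm, inv_mul_cancel₀ (norm_ne_zero_iff.2 he₀0)]
  · intro j k hjk
    by_contra hne'
    apply hproj j k hne'
    simp only [real_inner_smul_right] at hjk
    have hinv : (‖e₀‖⁻¹ : ℝ) ≠ 0 := inv_ne_zero (norm_ne_zero_iff.2 he₀0)
    have heq := mul_left_cancel₀ hinv hjk
    rw [inner_sub_left, heq, sub_self]

/-- In dimension at least 2, every vector has a unit vector orthogonal to it. -/
lemma aux_exists_perp (d : ℕ) (hd : 2 ≤ d) (e : EuclideanSpace ℝ (Fin d)) :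
    ∃ e' : EuclideanSpace ℝ (Fin d), ‖e'‖ = 1 ∧ ⟪e, e'⟫ = 0 := by
  set K : Submodule ℝ (EuclideanSpace ℝ (Fin d)) := ℝ ∙ e with hK
  have hKne : Kᗮ ≠ ⊥ := by
    intro hbot
    have htop : K = ⊤ := Submodule.orthogonal_eq_bot_iff.mp hbot
    have h1 : Module.finrank ℝ K ≤ 1 := by
      have := finrank_span_le_card (R := ℝ) ({e} : Set (EuclideanSpace ℝ (Fin d)))
      simpa using this
    rw [htop, finrank_top, finrank_euclideanSpace_fin] at h1
    omega
  obtain ⟨v, hvK, hv0⟩ := Submodule.exists_mem_ne_zero_of_ne_bot hKne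
  refine ⟨‖v‖⁻¹ • v, ?_, ?_⟩
  · rw [norm_smul, norm_inv, norm_norm, inv_mul_cancel₀ (norm_ne_zero_iff.2 hv0)]
  · have he : ⟪e, v⟫ = 0 :=
      (Submodule.mem_orthogonal K v).mp hvK e (Submodule.mem_span_singleton_self e)
    rw [real_inner_smul_right, he, mul_zero]

/-- Linear independence of `θ ↦ exp(i y·θ)` on the unit sphere `S^{d-1}`, `d ≥ 2`:
if `∑ⱼ cⱼ exp(i yⱼ·θ) = 0` for all unit `θ` with the `yⱼ` mutually distinct, then all `cⱼ = 0`. -/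
theorem stmt2 (d n : ℕ) (hd : 2 ≤ d) (y : Fin n → EuclideanSpace ℝ (Fin d))
    (hy : Function.Injective y) (c : Fin n → ℂ)
    (h : ∀ θ : EuclideanSpace ℝ (Fin d), ‖θ‖ = 1 →
      ∑ j, c j * Complex.exp (Complex.I * (⟪y j, θ⟫ : ℝ)) = 0) :
    ∀ j, c j = 0 := by
  obtain ⟨e, he1, hainj⟩ := aux_exists_dir d n (by omega) y hy
  obtain ⟨e', he'1, hee'⟩ := aux_exists_perp d hd e
  set a : Fin n → ℝ := fun j => ⟪y j, e⟫ with ha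
  set b : Fin n → ℝ := fun j => ⟪y j, e'⟫ with hb
  -- Step 1: vanishing on the great circle
  have hzero : ∀ t : ℝ,
      ∑ j, c j * Complex.exp (Complex.I * ((a j * Real.cos t + b j * Real.sin t : ℝ) : ℂ)) = 0 := by
    intro t
    set θ : EuclideanSpace ℝ (Fin d) := Real.cos t • e + Real.sin t • e' with hθ
    have hnorm : ‖θ‖ = 1 := by
      have hsq : ‖θ‖ ^ 2 = 1 := by
        rw [hθ, norm_add_sq_real]
        rw [norm_smul, norm_smul, real_inner_smul_left, real_inner_smul_right, hee']
        simp [he1, he'1, mul_pow, sq_abs, Real.cos_sq_add_sin_sq, Real.sin_sq_add_cos_sq]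
      rw [← Real.sqrt_sq (norm_nonneg θ), hsq, Real.sqrt_one]
    have hip : ∀ j, ⟪y j, θ⟫ = a j * Real.cos t + b j * Real.sin t := by
      intro j
      rw [hθ, inner_add_right, real_inner_smul_right, real_inner_smul_right]
      ring
    have := h θ hnorm
    simpa only [hip] using this
  -- Step 2: the entire function
  set F : ℂ → ℂ := fun z =>
    ∑ j, c j * Complex.exp (Complex.I * ((a j : ℂ) * Complex.cos z + (b j : ℂ) * Complex.sin z))
    with hF
  have hdiff : Differentiable ℂ F := by
    apply Differentiable.fun_sum
    intro j _
    apply Differentiable.const_mul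
    apply Differentiable.cexp
    apply Differentiable.const_mul
    exact ((Complex.differentiable_cos.const_mul _).add
      (Complex.differentiable_sin.const_mul _))
  have hF0 : ∀ t : ℝ, F (t : ℂ) = 0 := by
    intro t
    have : F (t : ℂ) =
        ∑ j, c j * Complex.exp (Complex.I * ((a j * Real.cos t + b j * Real.sin t : ℝ) : ℂ)) := by
      apply Finset.sum_congr rfl
      intro j _
      push_cast
      rfl
    rw [this, hzero t]
  have hFall : ∀ z : ℂ, F z = 0 := by
    have han : AnalyticOnNhd ℂ F Set.univ :=
      hdiff.differentiableOn.analyticOnNhd isOpen_univ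
    have hfreq : ∃ᶠ z in nhdsWithin (0 : ℂ) {(0 : ℂ)}ᶜ, F z = 0 := by
      have ht : Filter.Tendsto (fun k : ℕ => ((((k : ℝ) + 1)⁻¹ : ℝ) : ℂ))
          Filter.atTop (nhdsWithin (0 : ℂ) {(0 : ℂ)}ᶜ) := by
        apply tendsto_nhdsWithin_of_tendsto_nhds_of_eventually_within
        · have hr : Filter.Tendsto (fun k : ℕ => (((k : ℝ) + 1)⁻¹ : ℝ))
              Filter.atTop (nhds 0) := tendsto_one_div_add_atTop_nhds_zero_nat.congr (by
                intro k; rw [one_div])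
          have := (Complex.continuous_ofReal.tendsto (0 : ℝ)).comp hr
          exact this
        · filter_upwards with k
          simp only [Set.mem_compl_iff, Set.mem_singleton_iff]
          intro hzero'
          have : (((k : ℝ) + 1)⁻¹ : ℝ) = 0 := by exact_mod_cast hzero'
          have : (0:ℝ) < ((k : ℝ) + 1)⁻¹ := by positivity
          simp_all
      exact ht.frequently (Filter.Eventually.of_forall (fun k : ℕ => hF0 (((k : ℝ) + 1)⁻¹))).frequently
    have := han.eqOn_zero_of_preconnected_of_frequently_eq_zero
      isPreconnected_univ (Set.mem_univ 0) hfreq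
    intro z
    exact this (Set.mem_univ z)
  -- Step 3: evaluate at π/2 + i s
  have hexp : ∀ (A S B C : ℝ),
      Complex.I * ((A : ℂ) * (-(S : ℂ) * Complex.I) + (B : ℂ) * (C : ℂ))
        = ((A * S : ℝ) : ℂ) + ((B * C : ℝ) : ℂ) * Complex.I := by
    intro A S B C
    push_cast
    linear_combination (-(A : ℂ) * S) * Complex.I_sq
  have hr : ∀ r : ℝ,
      ∑ j, c j * Complex.exp (((a j * r : ℝ) : ℂ)
        + ((b j * Real.cosh (Real.arsinh r) : ℝ) : ℂ) * Complex.I) = 0 := by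
    intro r
    set s := Real.arsinh r with hs
    have hz := hFall ((Real.pi / 2 : ℝ) + (s : ℂ) * Complex.I)
    have hcos : Complex.cos ((Real.pi / 2 : ℝ) + (s : ℂ) * Complex.I)
        = -((Real.sinh s : ℝ) : ℂ) * Complex.I := by
      rw [Complex.cos_add, Complex.cos_mul_I, Complex.sin_mul_I,
        ← Complex.ofReal_cos, ← Complex.ofReal_sin, Real.cos_pi_div_two, Real.sin_pi_div_two,
        ← Complex.ofReal_sinh]
      simp
    have hsin : Complex.sin ((Real.pi / 2 : ℝ) + (s : ℂ) * Complex.I)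
        = ((Real.cosh s : ℝ) : ℂ) := by
      rw [Complex.sin_add, Complex.cos_mul_I, Complex.sin_mul_I,
        ← Complex.ofReal_cos, ← Complex.ofReal_sin, Real.cos_pi_div_two, Real.sin_pi_div_two,
        ← Complex.ofReal_cosh]
      simp
    rw [hF] at hz
    simp only [hcos, hsin] at hz
    rw [← hz]
    apply Finset.sum_congr rfl
    intro j _
    congr 1
    rw [hexp (a j) (Real.sinh s) (b j) (Real.cosh s), hs, Real.sinh_arsinh]
  -- Step 4: conclude by looking at the maximal frequency
  by_contra hc
  push_neg at hc
  obtain ⟨j0, hj0⟩ := hc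
  set Sf : Finset (Fin n) := Finset.univ.filter (fun j => c j ≠ 0) with hSf
  have hSne : Sf.Nonempty := ⟨j0, by simp [hSf, hj0]⟩
  obtain ⟨j1, hj1S, hj1max⟩ := Finset.exists_max_image Sf a hSne
  have hcj1 : c j1 ≠ 0 := (Finset.mem_filter.mp hj1S).2
  -- the bound
  set g : ℝ → ℝ := fun r =>
    ∑ j ∈ Finset.univ.erase j1, ‖c j‖ * Real.exp ((a j - a j1) * r) with hg
  have habs : ∀ (x w : ℝ) (cc : ℂ),
      ‖cc * Complex.exp ((x : ℂ) + (w : ℂ) * Complex.I)‖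
        = ‖cc‖ * Real.exp x := by
    intro x w cc
    rw [norm_mul, Complex.norm_exp]
    congr 2
    simp
  have hbound : ∀ r : ℝ, ‖c j1‖ ≤ g r := by
    intro r
    set w : Fin n → ℝ := fun j => b j * Real.cosh (Real.arsinh r) with hw
    set t : Fin n → ℂ := fun j => c j * Complex.exp (((a j * r : ℝ) : ℂ) + ((w j : ℝ) : ℂ) * Complex.I)
      with ht
    have hsum : t j1 + ∑ j ∈ Finset.univ.erase j1, t j = 0 := by
      rw [Finset.add_sum_erase _ _ (Finset.mem_univ j1)]
      exact hr r
    have h1 : ‖t j1‖ ≤ ∑ j ∈ Finset.univ.erase j1, ‖t j‖ := by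
      have : t j1 = -∑ j ∈ Finset.univ.erase j1, t j := by linear_combination hsum
      rw [this, norm_neg]
      exact norm_sum_le _ _
    have h2 : ‖t j1‖ = ‖c j1‖ * Real.exp (a j1 * r) := habs _ _ _
    have h3 : ∀ j, ‖t j‖ = ‖c j‖ * Real.exp (a j * r) :=
      fun j => habs _ _ _
    have h4 : ∑ j ∈ Finset.univ.erase j1, ‖t j‖ = g r * Real.exp (a j1 * r) := by
      rw [hg, Finset.sum_mul]
      apply Finset.sum_congr rfl
      intro j _
      rw [h3 j, mul_assoc, ← Real.exp_add]
      ring_nf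
    rw [h2, h4] at h1
    exact le_of_mul_le_mul_right h1 (Real.exp_pos _)
  have hgto : Filter.Tendsto g Filter.atTop (nhds 0) := by
    have : Filter.Tendsto g Filter.atTop
        (nhds (∑ j ∈ Finset.univ.erase j1, (0 : ℝ))) := by
      apply tendsto_finset_sum
      intro j hj
      by_cases hcj : c j = 0
      · simp only [hcj, norm_zero, zero_mul]
        exact tendsto_const_nhds
      · have hjS : j ∈ Sf := by simp [hSf, hcj]
        have hjne : j ≠ j1 := Finset.ne_of_mem_erase hj
        have hlt : a j - a j1 < 0 := by
          have hle : a j ≤ a j1 := hj1max j hjS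
          have : a j ≠ a j1 := fun habs' => hjne (hainj habs')
          cases lt_or_eq_of_le hle with
          | inl hlt => linarith
          | inr heq => exact absurd heq this
        have hbot : Filter.Tendsto (fun r : ℝ => (a j - a j1) * r) Filter.atTop Filter.atBot :=
          (Filter.tendsto_const_mul_atBot_of_neg hlt).mpr Filter.tendsto_id
        have := (Real.tendsto_exp_atBot.comp hbot).const_mul (‖c j‖)
        simpa using this
    simpa using this
  have hfinal : ‖c j1‖ ≤ 0 := ge_of_tendsto' hgto hbound
  exact hcj1 (norm_eq_zero.mp (le_antisymm hfinal (norm_nonneg _)))
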